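/- Let (X, ≤) be a well-quasi-order and → a finitely-branching transition relation on X that is downward-compatible with non-increasing path length: whenever x' ≤ x and x →* y via a path of length n, there exists y' ≤ y with x' →* y' via a path of length ≤ n. Let T be the tree of all paths from a fixed x₀ truncated at any node having a strict ancestor below it in ≤. Then T is finite, and a downward-closed target set G is reachable from x₀ if and only if some node of T lies in G. -/

import Mathlib

section Helpers

variable {X : Type*}

theorem my_chain'_getElem {R : X → X → Prop} {l : List X} (h : l.Chain' R) {i : ℕ}
    (hi : i + 1 < l.length) : R l[i] l[i + 1] := by
  have := List.isChain_iff_getElem.1 h i (by omega)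
  simpa [List.get_eq_getElem] using this

theorem my_prefix_getElem? {l₁ l₂ : List X} (h : l₁ <+: l₂) {n : ℕ} {a : X}
    (ha : l₁[n]? = some a) : l₂[n]? = some a := by
  obtain ⟨t, rfl⟩ := h
  have hn : n < l₁.length := (List.getElem?_eq_some_iff.1 ha).1
  rw [List.getElem?_append_left hn]
  exact ha

theorem my_reach_of_mem {step : X → X → Prop} :
    ∀ {p : List X} {x c : X}, p.Chain' step → p.head? = some x → c ∈ p →
      Relation.ReflTransGen step x c := by
  intro p
  induction p with
  | nil => intro x c _ _ hc; simp at hc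
  | cons a l ih =>
    intro x c hch hh hc
    obtain rfl : a = x := by simpa using hh
    rcases List.mem_cons.1 hc with rfl | hc
    · exact Relation.ReflTransGen.refl
    · have hl : l ≠ [] := by rintro rfl; simp at hc
      obtain ⟨b, t, rfl⟩ := List.exists_cons_of_ne_nil hl
      simp only [List.Chain', List.isChain_cons_cons] at hch
      exact Relation.ReflTransGen.head hch.1 (ih hch.2 rfl hc)

end Helpers

theorem my_bad_finite {X : Type*} [Preorder X]
    (hwqo : ∀ f : ℕ → X, ∃ i j, i < j ∧ f i ≤ f j)
    (step : X → X → Prop) (hfin : ∀ x : X, {y | step x y}.Finite) (x₀ : X) :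
    {q : List X | q.head? = some x₀ ∧ q.Chain' step ∧ ∀ i j : ℕ, i < j → j < q.length →
      ∀ a b : X, q[i]? = some a → q[j]? = some b → ¬ a ≤ b}.Finite := by
  classical
  set B : Set (List X) := {q : List X | q.head? = some x₀ ∧ q.Chain' step ∧
    ∀ i j : ℕ, i < j → j < q.length →
      ∀ a b : X, q[i]? = some a → q[j]? = some b → ¬ a ≤ b} with hBdef
  by_contra hBfin
  have hinf : B.Infinite := hBfin
  set P : List X → Prop := fun q => {r ∈ B | q <+: r}.Infinite with hPdef
  have hP0 : P [] := by
    have : {r ∈ B | ([] : List X) <+: r} = B := by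
      ext r; simp [List.nil_prefix]
    rw [hPdef]; simpa [this] using hinf
  have key : ∀ q : List X, P q → ∃ y : X, P (q ++ [y]) := by
    intro q hq
    by_contra hcon
    push_neg at hcon
    have hfinext : ∀ y : X, {r ∈ B | q ++ [y] <+: r}.Finite := by
      intro y
      by_contra h'
      exact hcon y h'
    -- the set of possible next elements is finite
    set T : Set X := {y : X | ∃ r ∈ B, q ++ [y] <+: r} with hTdef
    have hTfin : T.Finite := by
      rcases List.eq_nil_or_concat q with rfl | ⟨q', w, rfl⟩
      · apply Set.Finite.subset (Set.finite_singleton x₀)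
        rintro y ⟨r, hrB, hpre⟩
        have h0 : r[0]? = some y := my_prefix_getElem? hpre (by simp)
        have hh : r[0]? = some x₀ := by
          rw [← List.head?_eq_getElem?]; exact hrB.1
        simp only [Set.mem_singleton_iff]
        rw [h0] at hh; exact (Option.some_inj.1 hh)
      · -- q = q' ++ [w]
        apply Set.Finite.subset (hfin w)
        rintro y ⟨r, hrB, hpre⟩
        have hch : List.Chain' step (q'.concat w ++ [y]) := hrB.2.1.prefix hpre
        rw [List.concat_eq_append] at hch
        have := (List.isChain_append.1 hch).2.2
        have hw : ((q' ++ [w]).getLast? : Option X) = some w := by simp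
        exact this w hw y rfl
    have hsub : {r ∈ B | q <+: r} ⊆ {q} ∪ ⋃ y ∈ T, {r ∈ B | q ++ [y] <+: r} := by
      rintro r ⟨hrB, hpre⟩
      by_cases hrq : r = q
      · left; exact hrq
      · right
        obtain ⟨t, rfl⟩ := hpre
        have ht : t ≠ [] := by rintro rfl; simp at hrq
        obtain ⟨y, t', rfl⟩ := List.exists_cons_of_ne_nil ht
        have hpre' : q ++ [y] <+: q ++ y :: t' := ⟨t', by simp⟩
        refine Set.mem_biUnion (?_ : y ∈ T) ⟨hrB, hpre'⟩
        exact ⟨q ++ y :: t', hrB, hpre'⟩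
    have : ({q} ∪ ⋃ y ∈ T, {r ∈ B | q ++ [y] <+: r} : Set (List X)).Finite :=
      (Set.finite_singleton q).union (hTfin.biUnion fun y _ => hfinext y)
    exact hq (this.subset hsub)
  choose F hF using key
  let g : ℕ → {q : List X // P q} := fun n =>
    Nat.rec ⟨[], hP0⟩ (fun _ p => ⟨p.1 ++ [F p.1 p.2], hF p.1 p.2⟩) n
  have hgsucc : ∀ n, (g (n + 1)).1 = (g n).1 ++ [F (g n).1 (g n).2] := fun n => rfl
  have hlen : ∀ n, (g n).1.length = n := by
    intro n
    induction n with
    | zero => rfl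
    | succ n ih => rw [hgsucc, List.length_append, ih]; simp
  set f : ℕ → X := fun n => F (g n).1 (g n).2 with hfdef
  have hfget : ∀ n, (g (n + 1)).1[n]? = some (f n) := by
    intro n
    rw [hgsucc]
    have := List.getElem?_concat_length (l := (g n).1) (a := f n)
    rwa [hlen n] at this
  have hmono : ∀ m n, m ≤ n → (g m).1 <+: (g n).1 := by
    intro m n hmn
    induction n with
    | zero => have : m = 0 := Nat.le_zero.1 hmn; subst this; exact List.prefix_refl _
    | succ n ih =>
      rcases Nat.lt_or_ge m (n + 1) with h | h
      · exact (ih (Nat.lt_succ_iff.1 h)).trans ⟨_, (hgsucc n).symm⟩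
      · have : m = n + 1 := le_antisymm hmn h
        subst this; exact List.prefix_refl _
  obtain ⟨i, j, hij, hle⟩ := hwqo f
  obtain ⟨r, hrB, hpre⟩ := (g (j + 1)).2.nonempty
  have hri : r[i]? = some (f i) :=
    my_prefix_getElem? ((hmono (i + 1) (j + 1) (by omega)).trans hpre) (hfget i)
  have hrj : r[j]? = some (f j) := my_prefix_getElem? hpre (hfget j)
  have hjlen : j < r.length := by
    have := hpre.length_le
    rw [hlen (j + 1)] at this
    omega
  exact hrB.2.2 i j hij hjlen _ _ hri hrj hle

/-- The truncated reachability tree from `x₀`: the set of paths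
`p = x₀, c₁, …, c_n` (head of the list is the root `x₀`, consecutive elements
related by `step`) such that no strict ancestor of an *internal* node lies
below it: for `i < j` with `j` not the last index, `¬ p[i] ≤ p[j]`. -/
def TruncTree {X : Type*} [Preorder X] (step : X → X → Prop) (x₀ : X) :
    Set (List X) :=
  {p | p.head? = some x₀ ∧ p.Chain' step ∧
    ∀ i j : ℕ, i < j → j + 1 < p.length →
      ∀ a b : X, p[i]? = some a → p[j]? = some b → ¬ a ≤ b}

/-- For a well-quasi-order `(X, ≤)` and a finitely-branching transition
relation that is downward-compatible with non-increasing path lengths, the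
truncated reachability tree from `x₀` is finite, and a downward-closed target
set `G` is reachable from `x₀` iff some node of the tree lies in `G`. -/
theorem truncTree_finite_and_reach_iff {X : Type*} [Preorder X]
    (hwqo : ∀ f : ℕ → X, ∃ i j, i < j ∧ f i ≤ f j)
    (step : X → X → Prop)
    (hfin : ∀ x : X, {y | step x y}.Finite)
    (hcompat : ∀ (x' x y : X) (p : List X), x' ≤ x →
      p.head? = some x → p.Chain' step → p.getLast? = some y →
      ∃ (p' : List X) (y' : X), p'.head? = some x' ∧ p'.Chain' step ∧
        p'.getLast? = some y' ∧ y' ≤ y ∧ p'.length ≤ p.length)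
    (x₀ : X) (G : Set X) (hG : ∀ ⦃y z : X⦄, y ∈ G → z ≤ y → z ∈ G) :
    (TruncTree step x₀).Finite ∧
      ((∃ g ∈ G, Relation.ReflTransGen step x₀ g) ↔
        ∃ p ∈ TruncTree step x₀, ∃ c ∈ p, c ∈ G) := by
  classical
  constructor
  · -- finiteness
    have hBfin := my_bad_finite hwqo step hfin x₀
    show ({p : List X | p.head? = some x₀ ∧ p.Chain' step ∧
      ∀ i j : ℕ, i < j → j + 1 < p.length →
        ∀ a b : X, p[i]? = some a → p[j]? = some b → ¬ a ≤ b}).Finite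
    classical
    set B : Set (List X) := {q : List X | q.head? = some x₀ ∧ q.Chain' step ∧
      ∀ i j : ℕ, i < j → j < q.length →
        ∀ a b : X, q[i]? = some a → q[j]? = some b → ¬ a ≤ b} with hBdef
    set Sq : List X → Set X := fun q => {y : X | ∃ w, q.getLast? = some w ∧ step w y} with hSqdef
    have hSqfin : ∀ q : List X, (Sq q).Finite := by
      intro q
      rcases hq : q.getLast? with _ | w
      · apply Set.Finite.subset (Set.finite_empty)
        rintro y ⟨w, hw, -⟩
        rw [hq] at hw; exact absurd hw (by simp)
      · apply Set.Finite.subset (hfin w)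
        rintro y ⟨w', hw', hs⟩
        rw [hq] at hw'
        obtain rfl : w = w' := Option.some_inj.1 hw'
        exact hs
    set E : Set (List X × X) := {z | z.1 ∈ B ∧ z.2 ∈ Sq z.1} with hEdef
    have hEfin : E.Finite := by
      apply Set.Finite.subset (hBfin.biUnion (fun q (_ : q ∈ B) =>
        ((Set.finite_singleton q).prod (hSqfin q))))
      rintro ⟨q, y⟩ ⟨hqB, hy⟩
      exact Set.mem_biUnion hqB ⟨rfl, hy⟩
    apply Set.Finite.subset ((hEfin.image (fun z : List X × X => z.1 ++ [z.2])).insert [x₀])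
    rintro p ⟨hh, hc, hbad⟩
    have hne : p ≠ [] := by rintro rfl; simp at hh
    by_cases h2 : p.length ≤ 1
    · left
      obtain ⟨a, t, rfl⟩ := List.exists_cons_of_ne_nil hne
      obtain rfl : t = [] := by
        simp only [List.length_cons] at h2
        exact List.eq_nil_of_length_eq_zero (by omega)
      obtain rfl : a = x₀ := by simpa using hh
      rfl
    · right
      push_neg at h2
      obtain ⟨k, hk⟩ : ∃ k, p.length = k + 2 := ⟨p.length - 2, by omega⟩
      refine ⟨(p.dropLast, p.getLast hne), ⟨⟨?_, ?_, ?_⟩, ?_⟩, List.dropLast_concat_getLast hne⟩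
      · rw [List.head?_eq_getElem?, List.getElem?_dropLast, if_pos (by omega),
          ← List.head?_eq_getElem?]
        exact hh
      · exact hc.prefix (List.dropLast_prefix p)
      · intro i j hij hjlen a b ha hb
        rw [List.length_dropLast] at hjlen
        rw [List.getElem?_dropLast, if_pos (by omega)] at ha hb
        exact hbad i j hij (by omega) a b ha hb
      · refine ⟨p[k]'(by omega), ?_, ?_⟩
        · have h1 : p.dropLast.getLast? = p.dropLast[k]? := by
            rw [List.getLast?_eq_getElem?, List.length_dropLast, hk]
            norm_num
          rw [h1, List.getElem?_dropLast, if_pos (by omega)]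
          exact List.getElem?_eq_getElem (by omega)
        · have hg : p.getLast hne = p[k + 1]'(by omega) := by
            rw [List.getLast_eq_getElem]
            simp only [hk]
            congr 1
          rw [hg]
          exact my_chain'_getElem hc (by omega)
  · constructor
    · rintro ⟨g, hgG, hreach⟩
      have main : ∃ p : List X, (p.head? = some x₀ ∧ p.Chain' step ∧
          ∀ i j : ℕ, i < j → j + 1 < p.length →
            ∀ a b : X, p[i]? = some a → p[j]? = some b → ¬ a ≤ b) ∧ ∃ c ∈ p, c ∈ G := by
          classical
          obtain ⟨l, hl, hlast⟩ := List.exists_isChain_cons_of_relationReflTransGen hreach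
          have Qex : ∃ n, ∃ p : List X, p.length = n ∧ p.head? = some x₀ ∧ p.Chain' step ∧
              ∃ y ∈ G, p.getLast? = some y := by
            refine ⟨(x₀ :: l).length, x₀ :: l, rfl, rfl, hl, g, hgG, ?_⟩
            rw [List.getLast?_eq_getLast (List.cons_ne_nil _ _), hlast]
          obtain ⟨p, hplen, hph, hpc, y, hyG, hpl⟩ := Nat.find_spec Qex
          have hmin : ∀ m < Nat.find Qex, ¬ ∃ p : List X, p.length = m ∧ p.head? = some x₀ ∧
              p.Chain' step ∧ ∃ y ∈ G, p.getLast? = some y := fun m hm => Nat.find_min Qex hm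
          refine ⟨p, ⟨hph, hpc, ?_⟩, y, List.mem_of_getLast? hpl, hyG⟩
          intro i j hij hj1 a b ha hb hab
          have hjlt : j < p.length := by omega
          set q := p.drop j with hqdef
          have hq0 : q.head? = some b := by
            rw [List.head?_eq_getElem?, hqdef, List.getElem?_drop]
            simpa using hb
          have hqc : q.Chain' step := hpc.suffix (List.drop_suffix j p)
          have hqlen : q.length = p.length - j := List.length_drop
          have hqne : q ≠ [] := by
            intro h; rw [h] at hqlen; simp at hqlen; omega
          have hql : q.getLast? = some y := by
            obtain ⟨y2, hy2⟩ : ∃ y2, q.getLast? = some y2 := by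
              cases hq : q.getLast? with
              | none => exact absurd (List.getLast?_eq_none_iff.1 hq) hqne
              | some v => exact ⟨v, rfl⟩
            have hsplit : p = p.take j ++ q := (List.take_append_drop j p).symm
            rw [hsplit, List.getLast?_append, hy2] at hpl
            simp only [Option.some_or] at hpl
            rw [hy2, hpl]
          obtain ⟨p', y', hh', hc', hl', hy'le, hlen'⟩ := hcompat a b y q hab hq0 hqc hql
          have hp'ne : p' ≠ [] := by intro h; rw [h] at hh'; simp at hh'
          set P2 : List X := p.take i ++ p' with hP2def
          have htlen : (p.take i).length = i := by rw [List.length_take]; omega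
          have hP2len : P2.length < p.length := by
            rw [hP2def, List.length_append, htlen]; omega
          have hP2h : P2.head? = some x₀ := by
            rcases Nat.eq_zero_or_pos i with rfl | hi
            · simp only [hP2def, List.take_zero, List.nil_append]
              rw [hh']
              have hx : p[0]? = some x₀ := by rw [← List.head?_eq_getElem?]; exact hph
              rw [hx] at ha
              exact congrArg some (Option.some_inj.1 ha).symm
            · have ht : (p.take i).head? = some x₀ := by
                rw [List.head?_eq_getElem?, List.getElem?_take_of_lt hi, ← List.head?_eq_getElem?]
                exact hph
              rw [hP2def, List.head?_append, ht]
              rfl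
          have hP2c : P2.Chain' step := by
            rw [hP2def]; show List.IsChain step _; rw [List.isChain_append]
            refine ⟨hpc.prefix (List.take_prefix i p), hc', ?_⟩
            intro u hu v hv
            rcases Nat.eq_zero_or_pos i with rfl | hi
            · simp at hu
            · obtain ⟨k, rfl⟩ : ∃ k, i = k + 1 := ⟨i - 1, by omega⟩
              have hu' : p[k]? = some u := by
                rw [List.getLast?_eq_getElem?, htlen] at hu
                rwa [List.getElem?_take_of_lt (by omega)] at hu
              have hv' : v = a := by
                rw [hh'] at hv
                exact (Option.some_inj.1 hv).symm
              have hav : p[k + 1]? = some a := ha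
              have hs := my_chain'_getElem hpc (i := k) (by omega)
              have h1 : p[k] = u := by
                have := List.getElem?_eq_getElem (l := p) (i := k) (by omega)
                rw [hu'] at this; exact (Option.some_inj.1 this).symm
              have h2 : p[k + 1] = a := by
                have := List.getElem?_eq_getElem (l := p) (i := k + 1) (by omega)
                rw [hav] at this; exact (Option.some_inj.1 this).symm
              rw [← h1, hv', ← h2]
              exact hs
          have hP2l : P2.getLast? = some y' := by
            rw [hP2def, List.getLast?_append, hl']
            rfl
          refine hmin P2.length ?_ ⟨P2, rfl, hP2h, hP2c, y', hG hyG hy'le, hP2l⟩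
          rw [← hplen]
          exact hP2len
      obtain ⟨p, hpT, hc⟩ := main
      exact ⟨p, hpT, hc⟩
    · rintro ⟨p, hpT, c, hcp, hcG⟩
      obtain ⟨h1, h2, -⟩ := hpT
      exact ⟨c, hcG, my_reach_of_mem h2 h1 hcp⟩
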